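/- For the quadratic (Brier) scoring loss on binary outcomes, ℓ(p,y) = ½(p(y)−1)² + ½ p(1−y)² where p is a distribution on {0,1}, the loss is ½-mixable: for each y, the map p ↦ exp(−½ ℓ(p,y)) is concave over the one-dimensional simplex parameterized by q = p(1) ∈ [0,1]. -/

import Mathlib

lemma aux_concave : ConcaveOn ℝ (Set.Icc (-1 : ℝ) 1)
    (fun q : ℝ => Real.exp (-(1 / 2 : ℝ) * q ^ 2)) := by
  have hd : ∀ x : ℝ, HasDerivAt (fun q : ℝ => Real.exp (-(1 / 2 : ℝ) * q ^ 2))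
      (-x * Real.exp (-(1 / 2 : ℝ) * x ^ 2)) x := by
    intro x
    have h1 : HasDerivAt (fun q : ℝ => -(1 / 2 : ℝ) * q ^ 2) (-x) x := by
      have := ((hasDerivAt_pow 2 x).const_mul (-(1 / 2 : ℝ)))
      simpa using this.congr_deriv (by ring)
    simpa [mul_comm] using h1.exp
  apply concaveOn_of_deriv2_nonpos (convex_Icc _ _)
  · exact (Real.continuous_exp.comp (by continuity)).continuousOn
  · intro x hx
    exact (hd x).differentiableAt.differentiableWithinAt
  · intro x hx
    have hder : deriv (fun q : ℝ => Real.exp (-(1 / 2 : ℝ) * q ^ 2)) =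
        fun x => -x * Real.exp (-(1 / 2 : ℝ) * x ^ 2) := by
      funext y; exact (hd y).deriv
    rw [hder]
    exact (((differentiableAt_id.neg).mul (hd x).differentiableAt)).differentiableWithinAt
  · intro x hx
    rw [interior_Icc] at hx
    have hder : deriv (fun q : ℝ => Real.exp (-(1 / 2 : ℝ) * q ^ 2)) =
        fun x => -x * Real.exp (-(1 / 2 : ℝ) * x ^ 2) := by
      funext y; exact (hd y).deriv
    have h2 : HasDerivAt (fun x => -x * Real.exp (-(1 / 2 : ℝ) * x ^ 2))
        ((x ^ 2 - 1) * Real.exp (-(1 / 2 : ℝ) * x ^ 2)) x := by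
      have := (hasDerivAt_neg x).mul (hd x)
      refine this.congr_deriv ?_
      ring
    have key : (deriv^[2]) (fun q : ℝ => Real.exp (-(1 / 2 : ℝ) * q ^ 2)) x =
        (x ^ 2 - 1) * Real.exp (-(1 / 2 : ℝ) * x ^ 2) := by
      show deriv (deriv _) x = _
      rw [hder]
      exact h2.deriv
    rw [key]
    apply mul_nonpos_of_nonpos_of_nonneg
    · nlinarith [hx.1, hx.2]
    · exact (Real.exp_pos _).le

theorem quadratic_loss_half_mixable :
    ConcaveOn ℝ (Set.Icc (0 : ℝ) 1)
      (fun q : ℝ => Real.exp (-(1 / 2 : ℝ) * (1 - q) ^ 2)) ∧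
    ConcaveOn ℝ (Set.Icc (0 : ℝ) 1)
      (fun q : ℝ => Real.exp (-(1 / 2 : ℝ) * q ^ 2)) := by
  constructor
  · have h := aux_concave.comp_affineMap
      (AffineMap.const ℝ ℝ (1 : ℝ) + (-1 : ℝ) • AffineMap.id ℝ ℝ)
    have hsub : Set.Icc (0 : ℝ) 1 ⊆
        (AffineMap.const ℝ ℝ (1 : ℝ) + (-1 : ℝ) • AffineMap.id ℝ ℝ) ⁻¹'
          Set.Icc (-1 : ℝ) 1 := by
      intro x hx
      simp only [Set.mem_preimage, AffineMap.coe_add, AffineMap.coe_const,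
        AffineMap.coe_smul, AffineMap.coe_id, Pi.add_apply, Pi.smul_apply,
        Function.const_apply, id_eq, smul_eq_mul, Set.mem_Icc] at *
      constructor <;> linarith [hx.1, hx.2]
    have := h.subset hsub (convex_Icc _ _)
    refine this.congr ?_
    intro q _
    simp [Function.comp, smul_eq_mul]
    ring_nf
  · exact aux_concave.subset (Set.Icc_subset_Icc (by norm_num) le_rfl) (convex_Icc _ _)
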